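/- If f is a homeomorphism of a compact metric space such that the restriction of f to its non-wandering set Ω(f) is expansive with expansivity constant c>0, then for every x∈X the local stable set W^s_c(x) is contained in the stable set W^s(x), and the local unstable set W^u_c(x) is contained in the unstable set W^u(x). -/

import Mathlib

open Filter Metric Set Topology

variable {X : Type*} [MetricSpace X]

/-- `f^k x` for `k : ℤ`, where `f` is a homeomorphism. -/
def iterZ (f : X ≃ₜ X) (k : ℤ) (x : X) : X :=
  if 0 ≤ k then (⇑f)^[k.toNat] x else (⇑f.symm)^[(-k).toNat] x

/-- The classical shadowing property. -/
def Shadowing (f : X ≃ₜ X) : Prop :=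
  ∀ ε > (0:ℝ), ∃ δ > (0:ℝ), ∀ x : ℤ → X,
    (∀ k : ℤ, dist (f (x k)) (x (k+1)) < δ) →
    ∃ z : X, ∀ k : ℤ, dist (iterZ f k z) (x k) < ε

/-- The L-shadowing property. -/
def LShadowing (f : X ≃ₜ X) : Prop :=
  ∀ ε > (0:ℝ), ∃ δ > (0:ℝ), ∀ x : ℤ → X,
    (∀ k : ℤ, dist (f (x k)) (x (k+1)) ≤ δ) →
    Tendsto (fun k : ℤ => dist (f (x k)) (x (k+1))) cofinite (nhds 0) →
    ∃ z : X, (∀ k : ℤ, dist (iterZ f k z) (x k) ≤ ε) ∧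
      Tendsto (fun k : ℤ => dist (iterZ f k z) (x k)) cofinite (nhds 0)

/-- The stable set of `x`. -/
def stableSet (f : X ≃ₜ X) (x : X) : Set X :=
  {y | Tendsto (fun n : ℕ => dist ((⇑f)^[n] x) ((⇑f)^[n] y)) atTop (nhds 0)}

/-- The unstable set of `x`. -/
def unstableSet (f : X ≃ₜ X) (x : X) : Set X := stableSet f.symm x

/-- The local stable set of size `ε` of `x`. -/
def localStable (f : X ≃ₜ X) (ε : ℝ) (x : X) : Set X :=
  {y | ∀ n : ℕ, dist ((⇑f)^[n] x) ((⇑f)^[n] y) ≤ ε}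

/-- The local unstable set of size `ε` of `x`. -/
def localUnstable (f : X ≃ₜ X) (ε : ℝ) (x : X) : Set X := localStable f.symm ε x

/-- `V^s_ε(x) = W^s(x) ∩ W^s_ε(x)`. -/
def Vs (f : X ≃ₜ X) (ε : ℝ) (x : X) : Set X := stableSet f x ∩ localStable f ε x

/-- `V^u_ε(x) = W^u(x) ∩ W^u_ε(x)`. -/
def Vu (f : X ≃ₜ X) (ε : ℝ) (x : X) : Set X := unstableSet f x ∩ localUnstable f ε x

/-- The limit shadowing property. -/
def LimitShadowing (f : X ≃ₜ X) : Prop :=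
  ∀ x : ℕ → X, Tendsto (fun k : ℕ => dist (f (x k)) (x (k+1))) atTop (nhds 0) →
    ∃ y : X, Tendsto (fun k : ℕ => dist ((⇑f)^[k] y) (x k)) atTop (nhds 0)

/-- The two-sided limit shadowing property. -/
def TwoSidedLimitShadowing (f : X ≃ₜ X) : Prop :=
  ∀ x : ℤ → X, Tendsto (fun k : ℤ => dist (f (x k)) (x (k+1))) cofinite (nhds 0) →
    ∃ y : X, Tendsto (fun k : ℤ => dist (iterZ f k y) (x k)) cofinite (nhds 0)

/-- A non-wandering point. -/
def NonWandering (f : X ≃ₜ X) (x : X) : Prop :=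
  ∀ U : Set X, IsOpen U → x ∈ U → ∃ k : ℕ, 0 < k ∧ ((⇑f)^[k] '' U ∩ U).Nonempty

/-- The non-wandering set. -/
def omegaSet (f : X ≃ₜ X) : Set X := {x | NonWandering f x}

/-- Topologically mixing. -/
def TopMixing (f : X ≃ₜ X) : Prop :=
  ∀ U V : Set X, IsOpen U → IsOpen V → U.Nonempty → V.Nonempty →
    ∃ n : ℕ, 0 < n ∧ ∀ k ≥ n, ((⇑f)^[k] '' U ∩ V).Nonempty

/-- `f` is expansive on the set `A` (as a subsystem). -/
def ExpansiveOn (f : X ≃ₜ X) (A : Set X) : Prop :=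
  ∃ c > (0:ℝ), ∀ x ∈ A, ∀ y ∈ A,
    (∀ k : ℤ, dist (iterZ f k x) (iterZ f k y) ≤ c) → x = y

/-- The dynamical ball `Γ_δ(x)`. -/
def dynBall (f : X ≃ₜ X) (δ : ℝ) (x : X) : Set X :=
  {y | ∀ k : ℤ, dist (iterZ f k x) (iterZ f k y) ≤ δ}

/-- There is a periodic `ε`-pseudo-orbit containing both `x` and `y`. -/
def ChainRel (f : X ≃ₜ X) (ε : ℝ) (x y : X) : Prop :=
  ∃ (n : ℕ) (z : ℕ → X), 0 < n ∧ z 0 = x ∧ z n = x ∧ (∃ i ≤ n, z i = y) ∧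
    ∀ i < n, dist (f (z i)) (z (i+1)) < ε

/-- The chain recurrent class of `x`. -/
def chainClass (f : X ≃ₜ X) (x : X) : Set X := {y | ∀ ε > (0:ℝ), ChainRel f ε x y}

/-- `h` is a semiconjugacy from `g` on `K` to the full shift on two symbols. -/
def SemiConjShift (g : X → X) (K : Set X) (h : X → (ℤ → Bool)) : Prop :=
  ContinuousOn h K ∧ (∀ s : ℤ → Bool, ∃ p ∈ K, h p = s) ∧
    ∀ p ∈ K, h (g p) = fun i => h p (i + 1)

/-- `f` admits arbitrarily small topological semi-horseshoes inside `C`. -/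
def SmallHorseshoes (f : X ≃ₜ X) (C : Set X) : Prop :=
  ∀ ε > (0:ℝ), ∃ N : ℕ, 1 ≤ N ∧ ∃ K : Set X, K ⊆ C ∧ IsCompact K ∧
    (⇑f)^[N] '' K = K ∧ (∀ k : ℤ, Metric.diam (iterZ f k '' K) ≤ ε) ∧
    ∃ h : X → (ℤ → Bool), SemiConjShift ((⇑f)^[N]) K h

private lemma symm_iterate_iterate (f : X ≃ₜ X) (m : ℕ) (w : X) :
    (⇑f.symm)^[m] ((⇑f)^[m] w) = w :=
  (Function.LeftInverse.iterate f.symm_apply_apply m) w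

private lemma iterZ_iterate (f : X ≃ₜ X) (k : ℤ) (n : ℕ) (hk : 0 ≤ (n:ℤ) + k) (z : X) :
    iterZ f k ((⇑f)^[n] z) = (⇑f)^[((n:ℤ)+k).toNat] z := by
  by_cases h : 0 ≤ k
  · rw [iterZ, if_pos h, ← Function.iterate_add_apply]
    congr 1
    omega
  · rw [iterZ, if_neg h]
    have hrw : (⇑f)^[n] z = (⇑f)^[(-k).toNat] ((⇑f)^[((n:ℤ)+k).toNat] z) := by
      rw [← Function.iterate_add_apply]
      congr 1
      omega
    rw [hrw, symm_iterate_iterate]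

private lemma continuous_iterZ (f : X ≃ₜ X) (k : ℤ) : Continuous (iterZ f k) := by
  unfold iterZ
  by_cases h : 0 ≤ k
  · simp only [if_pos h]
    exact f.continuous.iterate _
  · simp only [if_neg h]
    exact f.symm.continuous.iterate _

private lemma nonWandering_symm (f : X ≃ₜ X) {x : X} (h : NonWandering f x) :
    NonWandering f.symm x := by
  intro U hU hx
  obtain ⟨k, hk, z, ⟨u, hu, huz⟩, hzU⟩ := h U hU hx
  exact ⟨k, hk, u, ⟨z, hzU, by rw [← huz, symm_iterate_iterate]⟩, hu⟩

private lemma iterZ_symm (f : X ≃ₜ X) (k : ℤ) (z : X) :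
    iterZ f.symm k z = iterZ f (-k) z := by
  rcases lt_trichotomy k 0 with h | h | h
  · rw [iterZ, if_neg (by omega), iterZ, if_pos (by omega)]
    simp
  · subst h; simp [iterZ]
  · rw [iterZ, if_pos (by omega), iterZ, if_neg (by omega)]
    simp

private lemma aux_stable [CompactSpace X] (f : X ≃ₜ X) (c : ℝ)
    (hexp : ∀ x ∈ omegaSet f, ∀ y ∈ omegaSet f,
      (∀ k : ℤ, dist (iterZ f k x) (iterZ f k y) ≤ c) → x = y) :
    ∀ x : X, localStable f c x ⊆ stableSet f x := by
  intro x y hy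
  by_contra hns
  rw [stableSet, Set.mem_setOf_eq, Metric.tendsto_atTop] at hns
  push_neg at hns
  obtain ⟨ε, hε, hfreq⟩ := hns
  have hfr : ∃ᶠ n in atTop, ε ≤ dist ((⇑f)^[n] x) ((⇑f)^[n] y) := by
    rw [Filter.frequently_atTop]
    intro N
    obtain ⟨n, hn, hd⟩ := hfreq N
    refine ⟨n, hn, ?_⟩
    rwa [Real.dist_0_eq_abs, abs_of_nonneg dist_nonneg] at hd
  obtain ⟨φ, hφmono, hφ⟩ := Filter.extraction_of_frequently_atTop hfr
  obtain ⟨⟨p, q⟩, -, ψ, hψmono, hlim⟩ := isCompact_univ.tendsto_subseq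
    (fun j => Set.mem_univ (((⇑f)^[φ j] x, (⇑f)^[φ j] y) : X × X))
  set n : ℕ → ℕ := φ ∘ ψ with hn
  have hnmono : StrictMono n := hφmono.comp hψmono
  have hpx : Tendsto (fun j => (⇑f)^[n j] x) atTop (𝓝 p) :=
    (continuous_fst.tendsto (p, q)).comp hlim
  have hpy : Tendsto (fun j => (⇑f)^[n j] y) atTop (𝓝 q) :=
    (continuous_snd.tendsto (p, q)).comp hlim
  have hdistpq : ε ≤ dist p q :=
    ge_of_tendsto (hpx.dist hpy) (Filter.Eventually.of_forall fun j => hφ (ψ j))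
  have hmem : ∀ (r : X) (w : X), Tendsto (fun j => (⇑f)^[n j] w) atTop (𝓝 r) →
      r ∈ omegaSet f := by
    intro r w hr U hU hrU
    obtain ⟨J, hJ⟩ := Filter.eventually_atTop.mp (hr.eventually (hU.mem_nhds hrU))
    have hlt : n J < n (J + 1) := hnmono (Nat.lt_succ_self J)
    refine ⟨n (J + 1) - n J, by omega, (⇑f)^[n (J + 1)] w,
      ⟨(⇑f)^[n J] w, hJ J le_rfl, ?_⟩, hJ (J + 1) (Nat.le_succ J)⟩
    rw [← Function.iterate_add_apply]
    congr 1
    omega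
  have hp : p ∈ omegaSet f := hmem p x hpx
  have hq : q ∈ omegaSet f := hmem q y hpy
  have hbound : ∀ k : ℤ, dist (iterZ f k p) (iterZ f k q) ≤ c := by
    intro k
    have hcont : Tendsto
        (fun j => dist (iterZ f k ((⇑f)^[n j] x)) (iterZ f k ((⇑f)^[n j] y)))
        atTop (𝓝 (dist (iterZ f k p) (iterZ f k q))) :=
      ((((continuous_iterZ f k).tendsto p).comp hpx).dist
        (((continuous_iterZ f k).tendsto q).comp hpy))
    refine le_of_tendsto hcont ?_
    have hev : ∀ᶠ j in atTop, 0 ≤ (n j : ℤ) + k := by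
      filter_upwards [hnmono.tendsto_atTop.eventually_ge_atTop (k.natAbs + 1)] with j hj
      omega
    filter_upwards [hev] with j hj
    rw [iterZ_iterate f k (n j) hj, iterZ_iterate f k (n j) hj]
    exact hy _
  have := hexp p hp q hq hbound
  rw [this, dist_self] at hdistpq
  linarith

/-- expansivity on the non-wandering set implies local stable sets
are contained in stable sets. -/
theorem localStable_subset_stableSet [CompactSpace X] (f : X ≃ₜ X) (c : ℝ) (hc : 0 < c)
    (hexp : ∀ x ∈ omegaSet f, ∀ y ∈ omegaSet f,
      (∀ k : ℤ, dist (iterZ f k x) (iterZ f k y) ≤ c) → x = y) :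
    ∀ x : X, localStable f c x ⊆ stableSet f x ∧
      localUnstable f c x ⊆ unstableSet f x := by
  intro x
  refine ⟨aux_stable f c hexp x, ?_⟩
  have hexp' : ∀ a ∈ omegaSet f.symm, ∀ b ∈ omegaSet f.symm,
      (∀ k : ℤ, dist (iterZ f.symm k a) (iterZ f.symm k b) ≤ c) → a = b := by
    intro a ha b hb h
    have ha' : a ∈ omegaSet f := by
      have := nonWandering_symm f.symm ha
      simpa [omegaSet] using this
    have hb' : b ∈ omegaSet f := by
      have := nonWandering_symm f.symm hb
      simpa [omegaSet] using this
    refine hexp a ha' b hb' fun k => ?_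
    have hk := h (-k)
    rwa [iterZ_symm, iterZ_symm, neg_neg] at hk
  exact aux_stable f.symm c hexp' x
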